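/- Let k > 0, let n ≥ 1 be an integer, σ > 0, N ≥ 1, and let the drift be a(y) = −k y^{2n−1}. If (x, β) ∈ ℝ^N × ℝ^N with pairwise distinct nodes satisfies the stationary Gauss–Galerkin equations with drift a, diffusion b ≡ 1 and parameter 1, then (σ^{1/n} x, β) satisfies the stationary Gauss–Galerkin equations with drift a, diffusion b ≡ 1 and parameter σ. -/

import Mathlib

open Finset

/-- `l'_{ii} = ∑_{k≠i} 1/(x_i − x_k)`, the derivative of the `i`-th Lagrange basis
polynomial at its own node. -/
noncomputable def lpDiag {N : ℕ} (x : Fin N → ℝ) (i : Fin N) : ℝ :=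
  ∑ k ∈ Finset.univ.erase i, 1 / (x i - x k)

/-- `l'_{ij} = (∏_{k≠j}(x_j − x_k)) / ((x_j − x_i)·∏_{k≠i}(x_i − x_k))` for `j ≠ i`,
the derivative of the `i`-th Lagrange basis polynomial at the node `x_j`. -/
noncomputable def lpOff {N : ℕ} (x : Fin N → ℝ) (i j : Fin N) : ℝ :=
  (∏ k ∈ Finset.univ.erase j, (x j - x k)) /
    ((x j - x i) * ∏ k ∈ Finset.univ.erase i, (x i - x k))

/-- `l''_{ii} = (∑_{k≠i} 1/(x_i − x_k))² − ∑_{k≠i} 1/(x_i − x_k)²`, the second derivative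
of the `i`-th Lagrange basis polynomial at its own node. -/
noncomputable def lppDiag {N : ℕ} (x : Fin N → ℝ) (i : Fin N) : ℝ :=
  (∑ k ∈ Finset.univ.erase i, 1 / (x i - x k)) ^ 2 -
    ∑ k ∈ Finset.univ.erase i, 1 / (x i - x k) ^ 2

/-- Right-hand side of the Gauss–Galerkin node equation (the `x`-equation):
`β_i A_i + σ²(2 β_i b(x_i)² l'_{ii} + ∑_{j≠i} β_j b(x_j)² (x_j − x_i)(l'_{ij})²)`,
where `A_i` is the drift value at node `i` (possibly configuration dependent). -/
noncomputable def ggDriftRHS {N : ℕ} (A : Fin N → ℝ) (b : ℝ → ℝ) (σ : ℝ)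
    (x β : Fin N → ℝ) (i : Fin N) : ℝ :=
  β i * A i + σ ^ 2 * (2 * β i * (b (x i)) ^ 2 * lpDiag x i +
    ∑ j ∈ Finset.univ.erase i, β j * (b (x j)) ^ 2 * (x j - x i) * (lpOff x i j) ^ 2)

/-- Right-hand side of the Gauss–Galerkin weight equation (the `β`-equation):
`2 β_i A_i l'_{ii} + σ²(β_i b(x_i)²((l'_{ii})² + l''_{ii}) + ∑_{j≠i} β_j b(x_j)²(l'_{ij})²)`. -/
noncomputable def ggWeightRHS {N : ℕ} (A : Fin N → ℝ) (b : ℝ → ℝ) (σ : ℝ)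
    (x β : Fin N → ℝ) (i : Fin N) : ℝ :=
  2 * β i * A i * lpDiag x i +
    σ ^ 2 * (β i * (b (x i)) ^ 2 * ((lpDiag x i) ^ 2 + lppDiag x i) +
      ∑ j ∈ Finset.univ.erase i, β j * (b (x j)) ^ 2 * (lpOff x i j) ^ 2)

/-- The stationary Gauss–Galerkin equations with node-dependent drift values `A_i`. -/
def StationaryGGWithDrift {N : ℕ} (A : Fin N → ℝ) (b : ℝ → ℝ) (σ : ℝ)
    (x β : Fin N → ℝ) : Prop :=
  ∀ i, 0 = ggDriftRHS A b σ x β i ∧ 0 = ggWeightRHS A b σ x β i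

/-- The stationary Gauss–Galerkin equations with drift `a : ℝ → ℝ`,
diffusion `b : ℝ → ℝ` and parameter `σ`. -/
def StationaryGG {N : ℕ} (a b : ℝ → ℝ) (σ : ℝ) (x β : Fin N → ℝ) : Prop :=
  StationaryGGWithDrift (fun i => a (x i)) b σ x β

-- scaling lemmas
theorem lpDiag_scale {N : ℕ} (c : ℝ) (x : Fin N → ℝ) (i : Fin N) :
    lpDiag (fun j => c * x j) i = c⁻¹ * lpDiag x i := by
  unfold lpDiag
  rw [Finset.mul_sum]
  refine Finset.sum_congr rfl fun kk _ => ?_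
  rw [show c * x i - c * x kk = c * (x i - x kk) by ring]
  simp [one_div, mul_inv, mul_comm]

theorem lpOff_scale {N : ℕ} (hN : 1 ≤ N) {c : ℝ} (hc0 : c ≠ 0) (x : Fin N → ℝ) (i j : Fin N) :
    lpOff (fun m => c * x m) i j = c⁻¹ * lpOff x i j := by
  unfold lpOff
  have hprod : ∀ m : Fin N, ∏ kk ∈ Finset.univ.erase m, (c * x m - c * x kk)
      = c ^ (N - 1) * ∏ kk ∈ Finset.univ.erase m, (x m - x kk) := by
    intro m
    rw [Finset.prod_congr rfl (fun kk _ => show c * x m - c * x kk = c * (x m - x kk) by ring),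
      Finset.prod_mul_distrib, Finset.prod_const, Finset.card_erase_of_mem (Finset.mem_univ m),
      Finset.card_univ, Fintype.card_fin]
  rw [hprod i, hprod j,
    show c * x j - c * x i = c * (x j - x i) by ring,
    show c * (x j - x i) * (c ^ (N - 1) * ∏ kk ∈ Finset.univ.erase i, (x i - x kk))
        = (c ^ (N - 1) * c) * ((x j - x i) * ∏ kk ∈ Finset.univ.erase i, (x i - x kk)) by ring,
    mul_div_mul_comm]
  congr 1
  rw [div_mul_eq_div_div, div_self (pow_ne_zero _ hc0), one_div]

theorem lppDiag_scale {N : ℕ} (c : ℝ) (x : Fin N → ℝ) (i : Fin N) :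
    lppDiag (fun j => c * x j) i = c⁻¹ ^ 2 * lppDiag x i := by
  unfold lppDiag
  have h1 : (∑ kk ∈ Finset.univ.erase i, 1 / (c * x i - c * x kk))
      = c⁻¹ * ∑ kk ∈ Finset.univ.erase i, 1 / (x i - x kk) := by
    rw [Finset.mul_sum]
    refine Finset.sum_congr rfl fun kk _ => ?_
    rw [show c * x i - c * x kk = c * (x i - x kk) by ring]
    simp [one_div, mul_inv, mul_comm]
  have h2 : (∑ kk ∈ Finset.univ.erase i, 1 / (c * x i - c * x kk) ^ 2)
      = c⁻¹ ^ 2 * ∑ kk ∈ Finset.univ.erase i, 1 / (x i - x kk) ^ 2 := by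
    rw [Finset.mul_sum]
    refine Finset.sum_congr rfl fun kk _ => ?_
    rw [show c * x i - c * x kk = c * (x i - x kk) by ring]
    rw [mul_pow]
    simp [one_div, mul_inv, mul_comm]
  rw [h1, h2]
  ring

/-- **Scaling of stationary Gauss–Galerkin solutions.**
For the drift `a(y) = −k y^{2n−1}` and unit diffusion, if `(x, β)` solves the stationary
Gauss–Galerkin equations with parameter `1`, then `(σ^{1/n} x, β)` solves them with
parameter `σ`. -/
theorem stationaryGG_scaling (k : ℝ) (hk : 0 < k) (n : ℕ) (hn : 1 ≤ n)
    (σ : ℝ) (hσ : 0 < σ) {N : ℕ} (hN : 1 ≤ N) (x β : Fin N → ℝ)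
    (hdist : ∀ i j : Fin N, i ≠ j → x i ≠ x j)
    (hsol : StationaryGG (fun y => -k * y ^ (2 * n - 1)) (fun _ => 1) 1 x β) :
    StationaryGG (fun y => -k * y ^ (2 * n - 1)) (fun _ => 1) σ
      (fun i => σ ^ (1 / (n : ℝ)) * x i) β := by
  set c := σ ^ (1 / (n : ℝ)) with hc_def
  have hc : 0 < c := Real.rpow_pos_of_pos hσ _
  have hc0 : c ≠ 0 := ne_of_gt hc
  have hn0 : (n : ℝ) ≠ 0 := Nat.cast_ne_zero.mpr (by omega)
  obtain ⟨m, hm⟩ : ∃ m, 2 * n - 1 = m := ⟨2 * n - 1, rfl⟩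
  have hm1 : 2 * n = m + 1 := by omega
  have hσ2 : σ ^ 2 = c ^ (m + 1) := by
    rw [← hm1, hc_def, ← Real.rpow_natCast (σ ^ ((1 : ℝ) / n)) (2 * n),
      ← Real.rpow_natCast σ 2, ← Real.rpow_mul hσ.le]
    congr 1
    field_simp
    norm_num
  intro i
  obtain ⟨h1, h2⟩ := hsol i
  simp only [ggDriftRHS, ggWeightRHS] at h1 h2 ⊢
  simp only [hm] at h1 h2 ⊢
  have hA : ∀ j : Fin N, -k * (c * x j) ^ m = c ^ m * (-k * x j ^ m) := by
    intro j; rw [mul_pow]; ring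
  constructor
  · have hsum : ∑ j ∈ Finset.univ.erase i,
        β j * ((1:ℝ)) ^ 2 * (c * x j - c * x i) * (lpOff (fun t => c * x t) i j) ^ 2
        = (c * c⁻¹ ^ 2) * ∑ j ∈ Finset.univ.erase i,
          β j * ((1:ℝ)) ^ 2 * (x j - x i) * (lpOff x i j) ^ 2 := by
      rw [Finset.mul_sum]
      refine Finset.sum_congr rfl fun j _ => ?_
      rw [lpOff_scale hN hc0]
      ring
    rw [hsum, lpDiag_scale, hA, hσ2]
    have : c ^ (m + 1) * (2 * β i * (1:ℝ) ^ 2 * (c⁻¹ * lpDiag x i)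
          + c * c⁻¹ ^ 2 * ∑ j ∈ Finset.univ.erase i,
              β j * (1:ℝ) ^ 2 * (x j - x i) * (lpOff x i j) ^ 2)
        = c ^ m * ((1:ℝ) ^ 2 * (2 * β i * (1:ℝ) ^ 2 * lpDiag x i
          + ∑ j ∈ Finset.univ.erase i,
              β j * (1:ℝ) ^ 2 * (x j - x i) * (lpOff x i j) ^ 2)) := by
      field_simp
      ring
    rw [this, show β i * (c ^ m * (-k * x i ^ m)) = c ^ m * (β i * (-k * x i ^ m)) by ring,
      ← mul_add, ← h1, mul_zero]
  · have hsum : ∑ j ∈ Finset.univ.erase i,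
        β j * ((1:ℝ)) ^ 2 * (lpOff (fun t => c * x t) i j) ^ 2
        = c⁻¹ ^ 2 * ∑ j ∈ Finset.univ.erase i,
          β j * ((1:ℝ)) ^ 2 * (lpOff x i j) ^ 2 := by
      rw [Finset.mul_sum]
      refine Finset.sum_congr rfl fun j _ => ?_
      rw [lpOff_scale hN hc0]
      ring
    rw [hsum, lpDiag_scale, lppDiag_scale, hA, hσ2]
    have : 2 * β i * (c ^ m * (-k * x i ^ m)) * (c⁻¹ * lpDiag x i)
          + c ^ (m + 1) * (β i * (1:ℝ) ^ 2 * ((c⁻¹ * lpDiag x i) ^ 2 + c⁻¹ ^ 2 * lppDiag x i)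
            + c⁻¹ ^ 2 * ∑ j ∈ Finset.univ.erase i, β j * (1:ℝ) ^ 2 * (lpOff x i j) ^ 2)
        = c ^ (m - 1) * (2 * β i * (-k * x i ^ m) * lpDiag x i
          + (1:ℝ) ^ 2 * (β i * (1:ℝ) ^ 2 * ((lpDiag x i) ^ 2 + lppDiag x i)
            + ∑ j ∈ Finset.univ.erase i, β j * (1:ℝ) ^ 2 * (lpOff x i j) ^ 2)) := by
      have hm0 : m = (m - 1) + 1 := by omega
      rw [hm0]
      field_simp
      simp only [Nat.add_sub_cancel]
      ring
    rw [this, ← h2, mul_zero]
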